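/- Let A be an n×n complex matrix and u ∈ ℂⁿ a unit vector with ‖(I + A)u‖ ≥ 1. Then for every real t ≥ 1, ‖(I + tA)u‖ ≥ ‖(I + A)u‖; moreover, if t > 1 and Au ≠ 0, then the inequality is strict: ‖(I + tA)u‖ > ‖(I + A)u‖. -/

import Mathlib

open Matrix

open scoped InnerProductSpace in
lemma aux_norm_sq {E : Type*} [NormedAddCommGroup E] [InnerProductSpace ℂ E]
    (u v : E) (t : ℝ) :
    ‖u + (t : ℂ) • v‖ ^ 2 = ‖u‖ ^ 2 + 2 * t * Complex.re ⟪u, v⟫_ℂ + t ^ 2 * ‖v‖ ^ 2 := by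
  rw [norm_add_sq (𝕜 := ℂ)]
  simp only [inner_smul_right, RCLike.re_to_complex, Complex.re_ofReal_mul, norm_smul, Complex.norm_real,
    Real.norm_eq_abs, mul_pow, sq_abs]
  ring

open scoped InnerProductSpace in
lemma aux_key {E : Type*} [NormedAddCommGroup E] [InnerProductSpace ℂ E]
    (u v : E) (hu : ‖u‖ = 1) (h : 1 ≤ ‖u + v‖) :
    (∀ t : ℝ, 1 ≤ t → ‖u + v‖ ≤ ‖u + (t : ℂ) • v‖) ∧
    (∀ t : ℝ, 1 < t → v ≠ 0 → ‖u + v‖ < ‖u + (t : ℂ) • v‖) := by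
  have e1 : ‖u + v‖ ^ 2 = 1 + 2 * Complex.re ⟪u, v⟫_ℂ + ‖v‖ ^ 2 := by
    have := aux_norm_sq u v 1
    simpa [hu] using this
  have hsq : 1 ≤ ‖u + v‖ ^ 2 := by nlinarith [norm_nonneg (u + v)]
  have hkey : 0 ≤ 2 * Complex.re ⟪u, v⟫_ℂ + ‖v‖ ^ 2 := by nlinarith
  constructor
  · intro t ht
    have e2 := aux_norm_sq u v t
    have hsq2 : ‖u + v‖ ^ 2 ≤ ‖u + (t : ℂ) • v‖ ^ 2 := by
      rw [e1, e2, hu]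
      nlinarith [sq_nonneg ‖v‖, mul_nonneg (by linarith : (0:ℝ) ≤ t - 1) hkey,
        mul_nonneg (mul_nonneg (by linarith : (0:ℝ) ≤ t - 1) (by linarith : (0:ℝ) ≤ t))
          (sq_nonneg ‖v‖)]
    exact (pow_le_pow_iff_left₀ (norm_nonneg _) (norm_nonneg _) two_ne_zero).mp hsq2
  · intro t ht hv
    have e2 := aux_norm_sq u v t
    have hvpos : 0 < ‖v‖ ^ 2 := pow_pos (norm_pos_iff.mpr hv) 2
    have hsq2 : ‖u + v‖ ^ 2 < ‖u + (t : ℂ) • v‖ ^ 2 := by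
      rw [e1, e2, hu]
      nlinarith [mul_nonneg (by linarith : (0:ℝ) ≤ t - 1) hkey,
        mul_pos (mul_pos (by linarith : (0:ℝ) < t - 1) (by linarith : (0:ℝ) < t)) hvpos]
    exact (pow_lt_pow_iff_left₀ (norm_nonneg _) (norm_nonneg _) two_ne_zero).mp hsq2

/-- For a unit vector `u` with `‖(I + A)u‖ ≥ 1`: for all `t ≥ 1`,
`‖(I + tA)u‖ ≥ ‖(I + A)u‖`, with strict inequality when `t > 1` and `Au ≠ 0`.
Here matrices act on Euclidean space `ℂⁿ` via `Matrix.toEuclideanCLM`. -/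
theorem norm_one_add_smul_apply_ge {n : ℕ} (A : Matrix (Fin n) (Fin n) ℂ)
    (u : EuclideanSpace ℂ (Fin n)) (hu : ‖u‖ = 1)
    (h : 1 ≤ ‖Matrix.toEuclideanCLM (𝕜 := ℂ) (1 + A) u‖) :
    (∀ t : ℝ, 1 ≤ t →
      ‖Matrix.toEuclideanCLM (𝕜 := ℂ) (1 + A) u‖ ≤
        ‖Matrix.toEuclideanCLM (𝕜 := ℂ) (1 + (t : ℂ) • A) u‖) ∧
    (∀ t : ℝ, 1 < t → Matrix.toEuclideanCLM (𝕜 := ℂ) A u ≠ 0 →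
      ‖Matrix.toEuclideanCLM (𝕜 := ℂ) (1 + A) u‖ <
        ‖Matrix.toEuclideanCLM (𝕜 := ℂ) (1 + (t : ℂ) • A) u‖) := by
  set v := Matrix.toEuclideanCLM (𝕜 := ℂ) A u with hv
  have key : ∀ s : ℂ, Matrix.toEuclideanCLM (𝕜 := ℂ) (1 + s • A) u = u + s • v := by
    intro s
    have e : Matrix.toEuclideanCLM (𝕜 := ℂ) (1 + s • A) =
        1 + s • Matrix.toEuclideanCLM (𝕜 := ℂ) A := by
      rw [map_add, _root_.map_one, _root_.map_smul]
    rw [e]; simp [hv]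
  have h1 : Matrix.toEuclideanCLM (𝕜 := ℂ) (1 + A) u = u + v := by
    have := key 1
    simpa using this
  rw [h1] at h ⊢
  have := aux_key u v hu h
  refine ⟨fun t ht => ?_, fun t ht hne => ?_⟩
  · rw [key (t : ℂ)]; exact this.1 t ht
  · rw [key (t : ℂ)]; exact this.2 t ht hne
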